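/- Let E be a real Banach space, let F be a bounded subset of E, and let x belong to the closed convex hull of F. Then there is a sequence (x_n)_{n≥1} of points of F such that (1/N)·Σ_{k=1}^N x_k converges in norm to x as N → ∞. -/

import Mathlib

set_option linter.unusedSectionVars false
set_option maxHeartbeats 1000000

open Filter Finset
section
variable {E : Type*} [NormedAddCommGroup E] [NormedSpace ℝ E]

lemma exists_list_mul {ι : Type} (s : Finset ι) (a : ι → ℕ) (z : ι → E) :
    ∃ l : List E, (∀ y ∈ l, ∃ i ∈ s, y = z i) ∧ l.length = ∑ i ∈ s, a i ∧
      l.sum = ∑ i ∈ s, a i • z i := by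
  classical
  induction s using Finset.induction with
  | empty => exact ⟨[], by simp, by simp, by simp⟩
  | @insert i s hni ih =>
    obtain ⟨l, hmem, hlen, hsum⟩ := ih
    refine ⟨List.replicate (a i) (z i) ++ l, ?_, ?_, ?_⟩
    · intro y hy
      rcases List.mem_append.1 hy with h | h
      · exact ⟨i, Finset.mem_insert_self _ _, (List.eq_of_mem_replicate h)⟩
      · obtain ⟨j, hj, hyj⟩ := hmem y h
        exact ⟨j, Finset.mem_insert_of_mem hj, hyj⟩
    · simp [hlen, Finset.sum_insert hni]
    · simp [hsum, Finset.sum_insert hni]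

lemma list_sum_getD (l : List E) : ∑ j ∈ Finset.range l.length, l.getD j 0 = l.sum := by
  induction l with
  | nil => simp
  | cons a l ih =>
    rw [List.length_cons, Finset.sum_range_succ']
    simp only [List.getD_cons_succ, List.getD_cons_zero, ih, List.sum_cons, add_comm]

end

section
variable {E : Type*} [NormedAddCommGroup E] [NormedSpace ℝ E]

lemma approx_list (F : Set E) (M : ℝ) (hM : ∀ y ∈ F, ‖y‖ ≤ M) (hM0 : 0 ≤ M)
    (x : E) (hx : x ∈ closure (convexHull ℝ F)) {ε : ℝ} (hε : 0 < ε) :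
    ∃ l : List E, 0 < l.length ∧ (∀ y ∈ l, y ∈ F) ∧
      ‖l.sum - (l.length : ℝ) • x‖ ≤ l.length * ε := by
  classical
  -- get y in convex hull close to x
  obtain ⟨y, hyF, hyx⟩ := Metric.mem_closure_iff.1 hx (ε/2) (by positivity)
  obtain ⟨ι, _, w, z, hw0, hw1, hzF, hsum⟩ := mem_convexHull_iff_exists_fintype.1 hyF
  set k : ℕ := Fintype.card ι with hk
  -- choose D
  obtain ⟨D, hD⟩ := exists_nat_gt (max 1 ((4 * k * (M + 1)) / ε))
  have hD1 : (1 : ℝ) ≤ D := le_of_lt (lt_of_le_of_lt (le_max_left _ _) hD)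
  have hDpos : (0:ℝ) < D := lt_of_lt_of_le one_pos hD1
  have hDk : 4 * k * (M + 1) ≤ D * ε := by
    rw [← div_le_iff₀ hε]
    exact le_of_lt (lt_of_le_of_lt (le_max_right _ _) hD)
  set a : ι → ℕ := fun i => ⌊w i * D⌋₊ with ha
  have haw : ∀ i, (a i : ℝ) ≤ w i * D := fun i => Nat.floor_le (mul_nonneg (hw0 i) (Nat.cast_nonneg D))
  have haw' : ∀ i, w i * D - 1 ≤ (a i : ℝ) := fun i => le_of_lt (Nat.sub_one_lt_floor _)
  have hsumaR : (∑ i, (a i : ℝ)) ≤ D := by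
    calc (∑ i, (a i : ℝ)) ≤ ∑ i, w i * D := Finset.sum_le_sum fun i _ => haw i
    _ = D := by rw [← Finset.sum_mul, hw1, one_mul]
  have hsuma : (∑ i, a i) ≤ D := by
    have := hsumaR
    rw [← Nat.cast_sum] at this
    exact_mod_cast this
  obtain ⟨l, hmem, hlen, hlsum⟩ := exists_list_mul (Finset.univ : Finset ι) a z
  -- nonempty ι
  have hιne : Nonempty ι := by
    by_contra h
    rw [not_nonempty_iff] at h
    simp [Finset.univ_eq_empty] at hw1
  obtain ⟨i₀⟩ := hιne
  set d : ℕ := D - ∑ i, a i with hd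
  have hdR : (d : ℝ) = D - ∑ i, (a i : ℝ) := by
    rw [hd, Nat.cast_sub hsuma, Nat.cast_sum]
  have hdk : (d : ℝ) ≤ k := by
    rw [hdR]
    have h2 : (D:ℝ) = ∑ i, w i * D := by rw [← Finset.sum_mul, hw1, one_mul]
    have h3 : ∑ i : ι, (w i * D - (a i : ℝ)) ≤ ∑ i : ι, (1:ℝ) :=
      Finset.sum_le_sum fun i _ => by have := haw' i; linarith
    rw [h2, ← Finset.sum_sub_distrib]
    simpa [hk] using h3
  refine ⟨List.replicate d (z i₀) ++ l, ?_, ?_, ?_⟩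
  · have : (List.replicate d (z i₀) ++ l).length = D := by
      simp [hlen, hd, Nat.sub_add_cancel hsuma]
    rw [this]
    exact_mod_cast lt_of_lt_of_le one_pos (by exact_mod_cast hD1)
  · intro yy hyy
    rcases List.mem_append.1 hyy with h | h
    · rw [List.eq_of_mem_replicate h]; exact hzF i₀
    · obtain ⟨i, _, rfl⟩ := hmem yy h
      exact hzF i
  · have hlength : (List.replicate d (z i₀) ++ l).length = D := by
      simp [hlen, hd, Nat.sub_add_cancel hsuma]
    rw [hlength]
    have hsum' : (List.replicate d (z i₀) ++ l).sum = d • z i₀ + ∑ i, a i • z i := by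
      simp [hlsum]
    rw [hsum']
    have key : d • z i₀ + ∑ i, a i • z i - (D:ℝ) • x
        = ((d:ℝ) • z i₀ + ∑ i, ((a i : ℝ) - D * w i) • z i) + (D:ℝ) • (y - x) := by
      have cast1 : d • z i₀ = (d:ℝ) • z i₀ := (Nat.cast_smul_eq_nsmul ℝ _ _).symm
      have cast2 : ∀ i : ι, a i • z i = (a i : ℝ) • z i :=
        fun i => (Nat.cast_smul_eq_nsmul ℝ _ _).symm
      rw [cast1, smul_sub, ← hsum, Finset.smul_sum]
      simp only [cast2, sub_smul, smul_smul]
      rw [Finset.sum_sub_distrib]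
      abel
    rw [key]
    have h1 : ‖(d:ℝ) • z i₀ + ∑ i, ((a i : ℝ) - D * w i) • z i‖ ≤ k * M + k * M := by
      refine le_trans (norm_add_le _ _) (add_le_add ?_ ?_)
      · rw [norm_smul, Real.norm_eq_abs, abs_of_nonneg (Nat.cast_nonneg d)]
        exact mul_le_mul hdk (hM _ (hzF i₀)) (norm_nonneg _) (by positivity)
      · refine le_trans (norm_sum_le _ _) ?_
        have : ∀ i : ι, ‖((a i : ℝ) - D * w i) • z i‖ ≤ 1 * M := by
          intro i
          rw [norm_smul, Real.norm_eq_abs]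
          refine mul_le_mul ?_ (hM _ (hzF i)) (norm_nonneg _) one_pos.le
          rw [abs_le]
          constructor
          · have := haw' i; nlinarith [haw i]
          · have := haw i; nlinarith
        refine le_trans (Finset.sum_le_sum fun i _ => this i) ?_
        simp [Finset.card_univ, hk]
    have h2 : ‖(D:ℝ) • (y - x)‖ ≤ D * (ε/2) := by
      rw [norm_smul, Real.norm_eq_abs, abs_of_pos hDpos]
      have : dist x y < ε / 2 := hyx
      rw [dist_comm, dist_eq_norm] at this
      exact mul_le_mul_of_nonneg_left this.le hDpos.le
    refine le_trans (norm_add_le _ _) (le_trans (add_le_add h1 h2) ?_)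
    have : k * M + k * M ≤ D * (ε/2) := by
      have hk0 : (0:ℝ) ≤ k := Nat.cast_nonneg k
      nlinarith
    linarith

end

section
variable {E : Type*} [NormedAddCommGroup E] [NormedSpace ℝ E]

/-- Sum of `q` full periods of the periodic extension of a list. -/
lemma periodic_sum_full (L : List E) (q : ℕ) :
    ∑ j ∈ Finset.range (L.length * q), L.getD (j % L.length) 0 = q • L.sum := by
  induction q with
  | zero => simp
  | succ q ih =>
    rw [Nat.mul_succ, ← Finset.sum_range_add_sum_Ico _ (Nat.le_add_right _ _), ih,
      Finset.sum_Ico_eq_sum_range]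
    have h1 : ∀ j ∈ Finset.range (L.length * q + L.length - L.length * q),
        L.getD ((L.length * q + j) % L.length) 0 = L.getD (j % L.length) 0 := by
      intro j _
      rw [Nat.mul_add_mod]
    rw [Finset.sum_congr rfl h1]
    have h2 : L.length * q + L.length - L.length * q = L.length := by omega
    rw [h2]
    have h3 : ∀ j ∈ Finset.range L.length, L.getD (j % L.length) 0 = L.getD j 0 := by
      intro j hj
      rw [Nat.mod_eq_of_lt (Finset.mem_range.1 hj)]
    rw [Finset.sum_congr rfl h3, list_sum_getD, succ_nsmul]

/-- Periodic-extension partial sum bound. -/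
lemma periodic_sum_bound (L : List E) (x : E) {ε C : ℝ} (hC : 0 ≤ C) (hε : 0 ≤ ε)
    (hn : 0 < L.length)
    (hs : ‖L.sum - (L.length : ℝ) • x‖ ≤ L.length * ε)
    (he : ∀ z ∈ L, ‖z - x‖ ≤ C) (t : ℕ) :
    ‖∑ j ∈ Finset.range t, (L.getD (j % L.length) 0 - x)‖
      ≤ (L.length * (t / L.length) : ℕ) * ε + ((t % L.length : ℕ) : ℝ) * C := by
  set n := L.length with hnn
  set q := t / n with hq
  set r := t % n with hr
  have ht : n * q + r = t := Nat.div_add_mod t n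
  have hle : n * q ≤ t := by omega
  rw [← Finset.sum_range_add_sum_Ico _ hle]
  refine le_trans (norm_add_le _ _) (add_le_add ?_ ?_)
  · have heq : ∑ j ∈ Finset.range (n * q), (L.getD (j % n) 0 - x)
        = q • (L.sum - (n : ℝ) • x) := by
      rw [Finset.sum_sub_distrib, periodic_sum_full, Finset.sum_const, Finset.card_range,
        smul_sub]
      congr 1
      rw [← Nat.cast_smul_eq_nsmul ℝ (n * q), ← Nat.cast_smul_eq_nsmul ℝ q, smul_smul]
      push_cast
      ring_nf
    rw [heq, ← Nat.cast_smul_eq_nsmul ℝ q, norm_smul, Real.norm_eq_abs,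
      abs_of_nonneg (Nat.cast_nonneg q)]
    calc (q : ℝ) * ‖L.sum - (n:ℝ) • x‖ ≤ q * (n * ε) :=
          mul_le_mul_of_nonneg_left hs (Nat.cast_nonneg q)
      _ = ((n * q : ℕ) : ℝ) * ε := by push_cast; ring
  · refine le_trans (norm_sum_le _ _) ?_
    have hterm : ∀ j ∈ Finset.Ico (n * q) t, ‖L.getD (j % n) 0 - x‖ ≤ C := by
      intro j _
      have hjn : j % n < n := Nat.mod_lt _ hn
      rw [List.getD_eq_getElem L 0 hjn]
      exact he _ (List.getElem_mem _)
    refine le_trans (Finset.sum_le_sum hterm) ?_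
    rw [Finset.sum_const, Nat.card_Ico, nsmul_eq_mul]
    have : t - n * q = r := by omega
    rw [this]

end

section
set_option linter.unusedSectionVars false
variable {E : Type*} [NormedAddCommGroup E] [NormedSpace ℝ E]

/-- cumulative (start position, deviation budget) of the blocks -/
noncomputable def SD (l : ℕ → List E) (C : ℝ) : ℕ → ℕ × ℝ
  | 0 => (0, 0)
  | k+1 =>
    ((SD l C k).1 +
      (l k).length * ⌈((k+1 : ℝ) * ((SD l C k).2 + C * (l (k+1)).length + 1)) / (l k).length⌉₊,
     (SD l C k).2 +
      (((l k).length *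
        ⌈((k+1 : ℝ) * ((SD l C k).2 + C * (l (k+1)).length + 1)) / (l k).length⌉₊ : ℕ) : ℝ)
        / (k+1 : ℝ))

/-- length of block `k` -/
noncomputable def LL (l : ℕ → List E) (C : ℝ) (k : ℕ) : ℕ :=
  (l k).length * ⌈((k+1 : ℝ) * ((SD l C k).2 + C * (l (k+1)).length + 1)) / (l k).length⌉₊

variable (l : ℕ → List E) (C : ℝ)

lemma SD_succ (k : ℕ) :
    SD l C (k+1) = ((SD l C k).1 + LL l C k, (SD l C k).2 + (LL l C k : ℝ) / (k+1 : ℝ)) := rfl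

lemma DD_nonneg (k : ℕ) : 0 ≤ (SD l C k).2 := by
  induction k with
  | zero => simp [SD]
  | succ k ih =>
    rw [SD_succ]
    have : (0:ℝ) ≤ (LL l C k : ℝ) / (k+1 : ℝ) := by positivity
    simpa using add_nonneg ih this

variable (hC : 0 ≤ C) (hn : ∀ m, 0 < (l m).length)
include hC hn

lemma LL_ge (k : ℕ) :
    (k+1 : ℝ) * ((SD l C k).2 + C * (l (k+1)).length + 1) ≤ (LL l C k : ℝ) := by
  set A : ℝ := (k+1 : ℝ) * ((SD l C k).2 + C * (l (k+1)).length + 1) with hA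
  have hn' : (0:ℝ) < (l k).length := by exact_mod_cast hn k
  have h1 : A / (l k).length ≤ (⌈A / (l k).length⌉₊ : ℝ) := Nat.le_ceil _
  have h2 : A = (l k).length * (A / (l k).length) := by field_simp
  rw [LL]
  push_cast
  calc A = (l k).length * (A / (l k).length) := h2
    _ ≤ (l k).length * (⌈A / (l k).length⌉₊ : ℝ) :=
        mul_le_mul_of_nonneg_left h1 hn'.le

lemma one_le_LL (k : ℕ) : (1:ℝ) ≤ (LL l C k : ℝ) := by
  refine le_trans ?_ (LL_ge l C hC hn k)
  have h1 : (0:ℝ) ≤ (SD l C k).2 := DD_nonneg l C k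
  have h2 : (0:ℝ) ≤ C * (l (k+1)).length := by positivity
  have h3 : (1:ℝ) ≤ (k+1 : ℝ) := by exact_mod_cast Nat.one_le_iff_ne_zero.2 (Nat.succ_ne_zero k)
  nlinarith

lemma LL_pos (k : ℕ) : 0 < LL l C k := by
  have := one_le_LL l C hC hn k
  exact_mod_cast lt_of_lt_of_le zero_lt_one this

lemma le_S (k : ℕ) : k ≤ (SD l C k).1 := by
  induction k with
  | zero => simp
  | succ k ih =>
    rw [SD_succ]
    have := LL_pos l C hC hn k
    omega

lemma S_mono {a b : ℕ} (h : a ≤ b) : (SD l C a).1 ≤ (SD l C b).1 := by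
  refine monotone_nat_of_le_succ (f := fun k => (SD l C k).1) (fun k => ?_) h
  simp only [SD_succ]
  omega

end

section
set_option linter.unusedSectionVars false
variable {E : Type*} [NormedAddCommGroup E] [NormedSpace ℝ E]

/-- index of the block containing position `i` -/
noncomputable def bidx (l : ℕ → List E) (C : ℝ) (i : ℕ) : ℕ :=
  Nat.findGreatest (fun m => (SD l C m).1 ≤ i) i

/-- the glued sequence -/
noncomputable def gseq (l : ℕ → List E) (C : ℝ) (i : ℕ) : E :=
  (l (bidx l C i)).getD ((i - (SD l C (bidx l C i)).1) % (l (bidx l C i)).length) 0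

variable (l : ℕ → List E) (C : ℝ)

lemma S_bidx_le (i : ℕ) : (SD l C (bidx l C i)).1 ≤ i :=
  Nat.findGreatest_spec (P := fun m => (SD l C m).1 ≤ i) (m := 0) (Nat.zero_le i) (by simp [SD])

variable (hC : 0 ≤ C) (hn : ∀ m, 0 < (l m).length)
include hC hn

lemma le_bidx {m i : ℕ} (h1 : (SD l C m).1 ≤ i) : m ≤ bidx l C i :=
  Nat.le_findGreatest (le_trans (le_S l C hC hn m) h1) h1

lemma lt_S_succ_bidx (i : ℕ) : i < (SD l C (bidx l C i + 1)).1 := by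
  by_contra h
  push_neg at h
  have := le_bidx l C hC hn h
  omega

lemma bidx_eq {m i : ℕ} (h1 : (SD l C m).1 ≤ i) (h2 : i < (SD l C (m+1)).1) :
    bidx l C i = m := by
  have hm : m ≤ bidx l C i := le_bidx l C hC hn h1
  by_contra hne
  have h3 : m + 1 ≤ bidx l C i := by omega
  have := le_trans (S_mono l C hC hn h3) (S_bidx_le l C i)
  omega

lemma gseq_mem (i : ℕ) : gseq l C i ∈ l (bidx l C i) := by
  rw [gseq, List.getD_eq_getElem _ 0 (Nat.mod_lt _ (hn _))]
  exact List.getElem_mem _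

lemma gseq_eq {m j : ℕ} (hj : j < LL l C m) :
    gseq l C ((SD l C m).1 + j) = (l m).getD (j % (l m).length) 0 := by
  have hb : bidx l C ((SD l C m).1 + j) = m := by
    refine bidx_eq l C hC hn (Nat.le_add_right _ _) ?_
    rw [SD_succ]
    omega
  rw [gseq, hb, Nat.add_sub_cancel_left]

end


section
variable {E : Type*} [NormedAddCommGroup E] [NormedSpace ℝ E]
variable (l : ℕ → List E) (C : ℝ) (x : E)
variable (hC : 0 ≤ C) (hn : ∀ m, 0 < (l m).length)
variable (hs : ∀ m, ‖(l m).sum - ((l m).length : ℝ) • x‖ ≤ (l m).length * (1/(m+1)))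
variable (he : ∀ m, ∀ z ∈ l m, ‖z - x‖ ≤ C)
include hC hn hs he

lemma block_sum {m t : ℕ} (ht : t ≤ LL l C m) :
    ∑ k ∈ Finset.Ico (SD l C m).1 ((SD l C m).1 + t), (gseq l C k - x)
      = ∑ j ∈ Finset.range t, ((l m).getD (j % (l m).length) 0 - x) := by
  rw [Finset.sum_Ico_eq_sum_range, Nat.add_sub_cancel_left]
  refine Finset.sum_congr rfl fun j hj => ?_
  rw [gseq_eq l C hC hn (lt_of_lt_of_le (Finset.mem_range.1 hj) ht)]

lemma prefix_bound (m : ℕ) :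
    ‖∑ k ∈ Finset.range (SD l C m).1, (gseq l C k - x)‖ ≤ (SD l C m).2 := by
  induction m with
  | zero => simp [SD]
  | succ m ih =>
    have hS : (SD l C (m+1)).1 = (SD l C m).1 + LL l C m := by rw [SD_succ]
    rw [hS, ← Finset.sum_range_add_sum_Ico _ (Nat.le_add_right _ _)]
    refine le_trans (norm_add_le _ _) ?_
    have hblock := block_sum l C x hC hn hs he (m := m) (t := LL l C m) le_rfl
    rw [hblock]
    have hper := periodic_sum_bound (l m) x (C := C) (ε := 1/(m+1)) hC (by positivity)
      (hn m) (hs m) (he m) (LL l C m)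
    have hdvd : (l m).length ∣ LL l C m := dvd_mul_right _ _
    have h1 : (l m).length * (LL l C m / (l m).length) = LL l C m := Nat.mul_div_cancel' hdvd
    have h2 : LL l C m % (l m).length = 0 := Nat.mod_eq_zero_of_dvd hdvd
    rw [h1, h2] at hper
    refine le_trans (add_le_add ih hper) ?_
    rw [SD_succ]
    simp only [Nat.cast_zero, zero_mul, add_zero]
    have : (LL l C m : ℝ) * (1 / (m+1 : ℝ)) = (LL l C m : ℝ) / (m+1 : ℝ) := by ring
    rw [this]

lemma total_bound (i : ℕ) :
    ‖∑ k ∈ Finset.range i, (gseq l C k - x)‖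
      ≤ (SD l C (bidx l C i)).2 + (i : ℝ) * (1/(bidx l C i + 1 : ℝ))
        + ((l (bidx l C i)).length : ℝ) * C := by
  set m := bidx l C i with hm
  have h1 : (SD l C m).1 ≤ i := S_bidx_le l C i
  have h2 : i < (SD l C m).1 + LL l C m := by
    have := lt_S_succ_bidx l C hC hn i
    rw [SD_succ] at this
    exact this
  set t := i - (SD l C m).1 with htdef
  have hti : (SD l C m).1 + t = i := by omega
  have htL : t ≤ LL l C m := by omega
  rw [← Finset.sum_range_add_sum_Ico _ h1]
  refine le_trans (norm_add_le _ _) ?_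
  have hpre := prefix_bound l C x hC hn hs he m
  have hico : ∑ k ∈ Finset.Ico (SD l C m).1 i, (gseq l C k - x)
      = ∑ j ∈ Finset.range t, ((l m).getD (j % (l m).length) 0 - x) := by
    rw [← hti]
    exact block_sum l C x hC hn hs he htL
  rw [hico]
  have hper := periodic_sum_bound (l m) x (C := C) (ε := 1/(m+1)) hC (by positivity)
    (hn m) (hs m) (he m) t
  have hb1 : (((l m).length * (t / (l m).length) : ℕ) : ℝ) * (1/(m+1 : ℝ))
      ≤ (i : ℝ) * (1/(m+1 : ℝ)) := by
    have hnat : (l m).length * (t / (l m).length) ≤ i := le_trans (Nat.mul_div_le _ _) (by omega)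
    have : (((l m).length * (t / (l m).length) : ℕ) : ℝ) ≤ (i : ℝ) := by exact_mod_cast hnat
    exact mul_le_mul_of_nonneg_right this (by positivity)
  have hb2 : ((t % (l m).length : ℕ) : ℝ) * C ≤ ((l m).length : ℝ) * C := by
    have : ((t % (l m).length : ℕ) : ℝ) ≤ ((l m).length : ℝ) := by
      exact_mod_cast (Nat.mod_lt _ (hn m)).le
    exact mul_le_mul_of_nonneg_right this hC
  linarith [le_trans hper (add_le_add hb1 hb2), hpre]

end
section
variable {E : Type*} [NormedAddCommGroup E] [NormedSpace ℝ E]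
variable (l : ℕ → List E) (C : ℝ) (x : E)
variable (hC : 0 ≤ C) (hn : ∀ m, 0 < (l m).length)
variable (hs : ∀ m, ‖(l m).sum - ((l m).length : ℝ) • x‖ ≤ (l m).length * (1/(m+1)))
variable (he : ∀ m, ∀ z ∈ l m, ‖z - x‖ ≤ C)
include hC hn hs he

lemma cesaro_main :
    Tendsto (fun N : ℕ => (N : ℝ)⁻¹ • ∑ k ∈ Finset.range N, gseq l C k)
      atTop (nhds x) := by
  rw [Metric.tendsto_atTop]
  intro ε hε
  obtain ⟨m₀', hm₀'⟩ := exists_nat_gt (4 / ε)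
  set m₀ := m₀' + 1 with hm₀def
  have hm₀R : 4 / ε < (m₀ : ℝ) := by
    push_cast [hm₀def]
    linarith
  have hm₀4 : 4 < ε * (m₀ : ℝ) := by
    rw [div_lt_iff₀ hε] at hm₀R
    linarith
  refine ⟨(SD l C m₀).1, fun N hN => ?_⟩
  set m := bidx l C N with hmdef
  have hmm₀ : m₀ ≤ m := le_bidx l C hC hn hN
  have hm1 : 1 ≤ m := le_trans (Nat.le_add_left _ _) hmm₀
  have hN1 : 1 ≤ N := le_trans (le_trans (Nat.le_add_left 1 m₀') (le_S l C hC hn m₀)) hN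
  have hNpos : (0:ℝ) < N := by exact_mod_cast hN1
  have hmean : (N : ℝ)⁻¹ • ∑ k ∈ Finset.range N, gseq l C k - x
      = (N : ℝ)⁻¹ • ∑ k ∈ Finset.range N, (gseq l C k - x) := by
    rw [Finset.sum_sub_distrib, smul_sub, Finset.sum_const, Finset.card_range,
      ← Nat.cast_smul_eq_nsmul ℝ N x, smul_smul, inv_mul_cancel₀ hNpos.ne', one_smul]
  rw [dist_eq_norm, hmean, norm_smul, Real.norm_eq_abs,
    abs_of_pos (by positivity : (0:ℝ) < (N:ℝ)⁻¹)]
  have htot := total_bound l C x hC hn hs he N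
  rw [← hmdef] at htot
  obtain ⟨k, hk⟩ : ∃ k, m = k + 1 := ⟨m - 1, by omega⟩
  have hLLge := LL_ge l C hC hn k
  have hSm : (SD l C m).1 = (SD l C k).1 + LL l C k := by rw [hk, SD_succ]
  have hDm : (SD l C m).2 = (SD l C k).2 + (LL l C k : ℝ) / (k+1 : ℝ) := by rw [hk, SD_succ]
  have hNS : (SD l C m).1 ≤ N := S_bidx_le l C N
  have hNL : (LL l C k : ℝ) ≤ (N : ℝ) := by
    have : LL l C k ≤ N := by omega
    exact_mod_cast this
  set A := (SD l C k).2 with hA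
  set B := C * ((l m).length : ℝ) with hB
  have hA0 : 0 ≤ A := DD_nonneg l C k
  have hB0 : 0 ≤ B := mul_nonneg hC (Nat.cast_nonneg _)
  have hmk : (m : ℝ) = (k : ℝ) + 1 := by exact_mod_cast hk
  have hmR : (1:ℝ) ≤ (m:ℝ) := by exact_mod_cast hm1
  have hm0 : (0:ℝ) < (m:ℝ) := lt_of_lt_of_le one_pos hmR
  have hNge : (m : ℝ) * (A + B + 1) ≤ (N : ℝ) := by
    refine le_trans ?_ hNL
    have hlm : l (k+1) = l m := by rw [hk]
    calc (m : ℝ) * (A + B + 1)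
        = (k+1 : ℝ) * ((SD l C k).2 + C * ((l (k+1)).length : ℝ) + 1) := by
          rw [hmk, hA, hB, hlm]
      _ ≤ (LL l C k : ℝ) := hLLge
  have hm4 : 4 < ε * (m : ℝ) := by
    have : ε * (m₀ : ℝ) ≤ ε * (m : ℝ) :=
      mul_le_mul_of_nonneg_left (by exact_mod_cast hmm₀) hε.le
    linarith
  -- the total error estimate
  set X := (SD l C m).2 + (N : ℝ) * (1/(m + 1 : ℝ)) + ((l m).length : ℝ) * C with hX
  have hXlt : X < ε * N := by
    have hd1 : A + B + 1 ≤ (N:ℝ) / m := (le_div_iff₀ hm0).2 (by linarith)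
    have hd2 : (LL l C k : ℝ) / (k+1 : ℝ) ≤ (N:ℝ) / m := by
      rw [← hmk]
      gcongr
    have hd3 : (N:ℝ) / (m+1 : ℝ) ≤ (N:ℝ) / m := by gcongr <;> linarith
    have hd4 : 3 / (m:ℝ) < ε := by
      rw [div_lt_iff₀ hm0]
      linarith
    have h5 : (3 / (m:ℝ)) * N < ε * N := mul_lt_mul_of_pos_right hd4 hNpos
    have h6 : (3:ℝ) * ((N:ℝ)/m) = (3/(m:ℝ)) * N := by ring
    have h7 : (N : ℝ) * (1/(m + 1 : ℝ)) = (N:ℝ) / (m+1:ℝ) := by ring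
    rw [hX, hDm, h7, mul_comm ((l m).length : ℝ) C, ← hB]
    linarith
  calc (N:ℝ)⁻¹ * ‖∑ k ∈ Finset.range N, (gseq l C k - x)‖
      ≤ (N:ℝ)⁻¹ * X := mul_le_mul_of_nonneg_left htot (by positivity)
    _ < ε := by
        rw [← div_eq_inv_mul, div_lt_iff₀ hNpos]
        linarith

end

/-- Let `E` be a real Banach space, `F` a bounded subset of
`E` and `x` a point of the closed convex hull of `F`.  Then there is a
sequence `(x_n)` of points of `F` which is Cesàro summable to `x`, i.e. whose
arithmetic means converge in norm to `x`. -/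
theorem stmt4 {E : Type*} [NormedAddCommGroup E] [NormedSpace ℝ E] [CompleteSpace E]
    (F : Set E) (hF : Bornology.IsBounded F)
    (x : E) (hx : x ∈ closure (convexHull ℝ F)) :
    ∃ seq : ℕ → E, (∀ n, seq n ∈ F) ∧
      Tendsto (fun N : ℕ => (N : ℝ)⁻¹ • (∑ k ∈ Finset.range N, seq k))
        atTop (nhds x) := by
  classical
  have hFne : F.Nonempty := by
    rcases Set.eq_empty_or_nonempty F with h | h
    · rw [h, convexHull_empty, closure_empty] at hx
      exact absurd hx (Set.notMem_empty x)
    · exact h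
  obtain ⟨M, hM⟩ := isBounded_iff_forall_norm_le.1 hF
  have hM0 : 0 ≤ M := le_trans (norm_nonneg _) (hM _ hFne.choose_spec)
  set C := M + ‖x‖ with hCdef
  have hC : 0 ≤ C := by positivity
  have happrox : ∀ m : ℕ, ∃ L : List E, 0 < L.length ∧ (∀ y ∈ L, y ∈ F) ∧
      ‖L.sum - (L.length : ℝ) • x‖ ≤ L.length * (1/((m:ℝ)+1)) :=
    fun m => approx_list F M hM hM0 x hx (by positivity)
  choose l hlen hmem hsum using happrox
  have he : ∀ m, ∀ z ∈ l m, ‖z - x‖ ≤ C := by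
    intro m z hz
    calc ‖z - x‖ ≤ ‖z‖ + ‖x‖ := norm_sub_le _ _
      _ ≤ M + ‖x‖ := by linarith [hM z (hmem m z hz)]
  refine ⟨gseq l C, ?_, ?_⟩
  · intro n
    exact hmem _ _ (gseq_mem l C hC hlen n)
  · exact cesaro_main l C x hC hlen hsum he
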